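/- A finite graph G satisfies χ_c(G) < p/q if and only if there exists a (p,q)-coloring c of G such that the digraph D_c(G) is acyclic. -/

import Mathlib

/-- A `(p,q)`-circular coloring of `G`: colors in `{0,…,p-1}` with
`q ≤ |c x - c y| ≤ p - q` on every edge. -/
def IsCircColoring {V : Type*} (G : SimpleGraph V) (p q : ℕ) (c : V → ℕ) : Prop :=
  (∀ v, c v < p) ∧ ∀ ⦃x y⦄, G.Adj x y →
    (q : ℤ) ≤ |(c x : ℤ) - (c y : ℤ)| ∧ |(c x : ℤ) - (c y : ℤ)| ≤ (p : ℤ) - (q : ℤ)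

/-- The circular chromatic number: `inf { p/q : G has a (p,q)-coloring }`. -/
noncomputable def circChrom {V : Type*} (G : SimpleGraph V) : ℝ :=
  sInf {r : ℝ | ∃ p q : ℕ, 0 < p ∧ 0 < q ∧ r = (p : ℝ) / (q : ℝ) ∧
    ∃ c : V → ℕ, IsCircColoring G p q c}

/-- The arc relation of the digraph `D_c(G)` associated to a `(p,q)`-coloring `c`:
an arc `x → y` for every edge `xy` with `c y - c x ≡ q (mod p)`. -/
def DArc {V : Type*} (G : SimpleGraph V) (p q : ℕ) (c : V → ℕ) (x y : V) : Prop :=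
  G.Adj x y ∧ ((c y : ℤ) - (c x : ℤ)) % (p : ℤ) = (q : ℤ) % (p : ℤ)

/-- A relation (digraph) is acyclic: no directed cycle, i.e. no vertex reaches
itself by a nontrivial directed path. -/
def Acyclic {V : Type*} (R : V → V → Prop) : Prop :=
  ∀ v, ¬ Relation.TransGen R v v

/-- A `(p,1)`-coloring viewed as a proper coloring with colors in `ZMod p`. -/
def IsProperZ {V : Type*} (p : ℕ) (G : SimpleGraph V) (c : V → ZMod p) : Prop :=
  ∀ ⦃x y⦄, G.Adj x y → c x ≠ c y

/-- Arc relation of `D_c(G)` for a `(p,1)`-coloring with colors in `ZMod p`: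
an arc `x → y` for every edge `xy` with `c y - c x = 1`. -/
def ZArc {V : Type*} {p : ℕ} (G : SimpleGraph V) (c : V → ZMod p) (x y : V) : Prop :=
  G.Adj x y ∧ c y - c x = 1

/-- `K⁻`: the complete graph on `{0,1,2,3}` (with `v₁ = 0`, `v₂ = 1`, `v₃ = 2`,
`v₄ = 3`) minus the edge `{0,1}`. -/
def Kminus : SimpleGraph (Fin 4) :=
  SimpleGraph.fromRel (fun x y => ¬((x = 0 ∧ y = 1) ∨ (x = 1 ∧ y = 0)))

/-- Edge list of the gadget `H`: vertices `a = 0`, `b = 1`, `c = 2`, `d = 3`,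
and four copies of `K⁻` with terminal pairs `(a,d), (d,b), (b,c), (c,a)` whose
internal vertex pairs are `(4,5), (6,7), (8,9), (10,11)`, together with the
edges `ad, db, bc, ca`. -/
def HEdges : List (Fin 12 × Fin 12) :=
  [(0,4),(0,5),(3,4),(3,5),(4,5),
   (3,6),(3,7),(1,6),(1,7),(6,7),
   (1,8),(1,9),(2,8),(2,9),(8,9),
   (2,10),(2,11),(0,10),(0,11),(10,11),
   (0,3),(3,1),(1,2),(2,0)]

/-- The gadget graph `H`. -/
def HGraph : SimpleGraph (Fin 12) :=
  SimpleGraph.fromRel (fun x y => (x, y) ∈ HEdges)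

/-- The gadget graph `K` for parameters `k, n`: vertices `a = 0`, `b = 1`, and
`vᵢ = i + 1` for `1 ≤ i ≤ n - 1`; the `vᵢ` form a clique, `a` is adjacent to
`v₁, …, v_{n-2}` and `b` is adjacent to `v_{n-1}`. -/
def Kgadget (n : ℕ) : SimpleGraph (Fin (n + 1)) :=
  SimpleGraph.fromRel (fun x y =>
    (2 ≤ x.val ∧ 2 ≤ y.val) ∨ (x.val = 0 ∧ 2 ≤ y.val ∧ y.val ≤ n - 1) ∨
      (x.val = 1 ∧ y.val = n))

/-- `o` orients every edge of `G'` (chooses exactly one direction for each edge). -/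
def Orients {V : Type*} (G' : SimpleGraph V) (o : V → V → Prop) : Prop :=
  ∀ ⦃u v⦄, G'.Adj u v → (o u v ↔ ¬ o v u)

/-- The graph obtained from `G'` by replacing every edge `uv` (oriented by `o`)
by a copy of the gadget `(Hg; ta, tb)`: `u` is identified with `ta`, `v` with
`tb`, and the internal vertices of the copy for the edge `uv` are the vertices
`(u, v, i)`. -/
def replaceEdges {V W : Type*} (G' : SimpleGraph V) (o : V → V → Prop)
    (Hg : SimpleGraph W) (ta tb : W) :
    SimpleGraph (V ⊕ (V × V × {w : W // w ≠ ta ∧ w ≠ tb})) :=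
  SimpleGraph.fromRel (fun z w =>
    match z, w with
    | Sum.inl u, Sum.inl v => G'.Adj u v ∧ Hg.Adj ta tb
    | Sum.inl u, Sum.inr (x, y, i) =>
        G'.Adj x y ∧ o x y ∧ ((u = x ∧ Hg.Adj ta i.1) ∨ (u = y ∧ Hg.Adj tb i.1))
    | Sum.inr (x, y, i), Sum.inr (x', y', j) =>
        x = x' ∧ y = y' ∧ G'.Adj x y ∧ o x y ∧ Hg.Adj i.1 j.1
    | _, _ => False)

/-- Disjoint union of two simple graphs. -/
def disjUnion {V W : Type*} (G : SimpleGraph V) (H : SimpleGraph W) :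
    SimpleGraph (V ⊕ W) :=
  SimpleGraph.fromRel (fun z w =>
    match z, w with
    | Sum.inl a, Sum.inl b => G.Adj a b
    | Sum.inr a, Sum.inr b => H.Adj a b
    | _, _ => False)

section GuichardHelpers

open Relation

private lemma int_emod_cases {a b p : ℤ} (hp : 0 < p) (ha : -p < a) (ha' : a < p)
    (hb : 0 ≤ b) (hb' : b < p) (h : a % p = b % p) : a = b ∨ a = b - p := by
  have hd : p ∣ (a - b) :=
    Int.dvd_of_emod_eq_zero (Int.emod_eq_emod_iff_emod_sub_eq_zero.mp h)
  obtain ⟨k, hk⟩ := hd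
  have hk1 : k < 1 := by
    by_contra hk1
    push_neg at hk1
    have : p * 1 ≤ p * k := mul_le_mul_of_nonneg_left hk1 hp.le
    omega
  have hk2 : -2 < k := by
    by_contra hk2
    push_neg at hk2
    have : p * k ≤ p * (-2) := mul_le_mul_of_nonneg_left hk2 hp.le
    omega
  interval_cases k <;> omega

private noncomputable def hgt {V : Type*} [Fintype V] (R : V → V → Prop) (v : V) : ℕ :=
  Set.ncard {u | Relation.TransGen R u v}

private lemma hgt_le {V : Type*} [Fintype V] (R : V → V → Prop) (v : V) :
    hgt R v ≤ Fintype.card V := by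
  have h1 : {u | Relation.TransGen R u v}.ncard ≤ (Set.univ : Set V).ncard :=
    Set.ncard_le_ncard (Set.subset_univ _) Set.finite_univ
  simpa [hgt, Set.ncard_univ, Nat.card_eq_fintype_card] using h1

private lemma hgt_lt {V : Type*} [Fintype V] {R : V → V → Prop} (hac : Acyclic R)
    {x y : V} (h : R x y) : hgt R x < hgt R y := by
  apply Set.ncard_lt_ncard _ (Set.toFinite _)
  constructor
  · intro u hu
    exact Relation.TransGen.tail hu h
  · intro hsub
    have hx : x ∈ {u | Relation.TransGen R u y} := Relation.TransGen.single h
    exact hac x (hsub hx)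

private lemma fwd_bnd {p q p' q' A B CA CB rA rB : ℤ}
    (hp : 0 < p) (hp' : 0 < p') (hq : 1 ≤ q)
    (hkey : q * p' + 1 ≤ q' * p)
    (hAB : q' ≤ A - B) (hAB' : A - B ≤ p' - q')
    (hCA : CA * p' = A * p - rA) (hCB : CB * p' = B * p - rB)
    (hrA : 0 ≤ rA) (hrA' : rA < p') (hrB : 0 ≤ rB) (hrB' : rB < p') :
    q ≤ CA - CB ∧ CA - CB ≤ p - q := by
  have e : (CA - CB) * p' = (A - B) * p - rA + rB := by linear_combination hCA - hCB
  have k1 : q' * p ≤ (A - B) * p := mul_le_mul_of_nonneg_right hAB hp.le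
  have k2 : (A - B) * p ≤ (p' - q') * p := mul_le_mul_of_nonneg_right hAB' hp.le
  constructor
  · have h1 : (q - 1) * p' < (CA - CB) * p' := by nlinarith
    have := lt_of_mul_lt_mul_right h1 hp'.le
    linarith
  · have h1 : (CA - CB) * p' < (p - q + 1) * p' := by nlinarith
    have := lt_of_mul_lt_mul_right h1 hp'.le
    linarith

private lemma bnd {N n p q D H1 H2 : ℤ} (hn : 0 ≤ n) (hN : N = n + 2) (hq : 1 ≤ q)
    (hp : 2 * q + 1 ≤ p) (h1 : 0 ≤ H1) (h1' : H1 ≤ n) (h2 : 0 ≤ H2) (h2' : H2 ≤ n)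
    (hcase : (q + 1 ≤ D ∧ D ≤ p - q - 1) ∨ (D = q ∧ H2 < H1) ∨ (D = p - q ∧ H1 < H2)) :
    N * q ≤ N * D + H1 - H2 ∧ N * D + H1 - H2 ≤ (N * p - 1) - N * q := by
  have hN0 : (0:ℤ) ≤ N := by omega
  have key : N * (2 * q + 1) ≤ N * p := mul_le_mul_of_nonneg_left hp hN0
  rcases hcase with ⟨hD1, hD2⟩ | ⟨hD, hH⟩ | ⟨hD, hH⟩
  · have k1 : N * (q + 1) ≤ N * D := mul_le_mul_of_nonneg_left hD1 hN0
    have k2 : N * D ≤ N * (p - q - 1) := mul_le_mul_of_nonneg_left hD2 hN0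
    constructor <;> nlinarith
  · subst hD
    constructor <;> nlinarith
  · subst hD
    constructor <;> nlinarith

private lemma forward_dir {V : Type*} (G : SimpleGraph V) (p q p' q' : ℕ)
    (hp : 0 < p) (hq : 0 < q) (hp' : 0 < p') (hq' : 0 < q')
    (hlt : p' * q < p * q') (c' : V → ℕ) (hc' : IsCircColoring G p' q' c') :
    ∃ c : V → ℕ, IsCircColoring G p q c ∧ Acyclic (DArc G p q c) := by
  classical
  set c : V → ℕ := fun v => c' v * p / p' with hcdef
  have hp'Z : (0:ℤ) < (p':ℤ) := by exact_mod_cast hp'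
  have hpZ : (0:ℤ) < (p:ℤ) := by exact_mod_cast hp
  have hqZ : (1:ℤ) ≤ (q:ℤ) := by exact_mod_cast hq
  have hkey : (q:ℤ) * p' + 1 ≤ (q':ℤ) * p := by
    have h := hlt
    have : ((p':ℕ):ℤ) * q < ((p:ℕ):ℤ) * q' := by exact_mod_cast h
    nlinarith
  set r : V → ℤ := fun v => ((c' v : ℤ) * p) % p' with hrdef
  have hr0 : ∀ v, 0 ≤ r v := fun v => Int.emod_nonneg _ (by positivity)
  have hr1 : ∀ v, r v < p' := fun v => Int.emod_lt_of_pos _ hp'Z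
  have hC : ∀ v, ((c v : ℤ)) * p' = (c' v : ℤ) * p - r v := by
    intro v
    have h1 : ((c v : ℤ)) = ((c' v : ℤ) * p) / p' := by
      simp only [hcdef]
      push_cast [Int.natCast_ediv]
      ring_nf
    have h2 := Int.mul_ediv_add_emod ((c' v : ℤ) * p) (p' : ℤ)
    rw [h1]
    simp only [hrdef]
    linarith
  have hclt : ∀ v, c v < p := by
    intro v
    have h1 : (c' v : ℤ) ≤ (p':ℤ) - 1 := by
      have := hc'.1 v
      omega
    have h3 : (c' v : ℤ) * p ≤ ((p':ℤ) - 1) * p := mul_le_mul_of_nonneg_right h1 hpZ.le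
    have h4 : ((c v : ℤ)) * p' < (p:ℤ) * p' := by
      have := hC v
      have := hr0 v
      nlinarith
    have h5 : ((c v : ℤ)) < (p:ℤ) := lt_of_mul_lt_mul_right h4 hp'Z.le
    exact_mod_cast h5
  have main : ∀ ⦃x y⦄, G.Adj x y →
      ((q:ℤ) ≤ (c x:ℤ) - (c y:ℤ) ∧ (c x:ℤ) - (c y:ℤ) ≤ (p:ℤ) - q) ∨
      ((q:ℤ) ≤ (c y:ℤ) - (c x:ℤ) ∧ (c y:ℤ) - (c x:ℤ) ≤ (p:ℤ) - q) := by
    intro x y hxy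
    obtain ⟨hl, hu⟩ := hc'.2 hxy
    rcases abs_cases ((c' x : ℤ) - (c' y : ℤ)) with ⟨he, _⟩ | ⟨he, _⟩
    · left
      exact fwd_bnd hpZ hp'Z hqZ hkey (by omega) (by omega) (hC x) (hC y)
        (hr0 x) (hr1 x) (hr0 y) (hr1 y)
    · right
      exact fwd_bnd hpZ hp'Z hqZ hkey (by omega) (by omega) (hC y) (hC x)
        (hr0 y) (hr1 y) (hr0 x) (hr1 x)
  have hcol : IsCircColoring G p q c := by
    refine ⟨hclt, fun x y hxy => ?_⟩
    rcases main hxy with ⟨h1, h2⟩ | ⟨h1, h2⟩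
    · rw [abs_of_nonneg (by linarith)]
      exact ⟨h1, h2⟩
    · rw [abs_sub_comm, abs_of_nonneg (by linarith)]
      exact ⟨h1, h2⟩
  have step : ∀ ⦃x y⦄, DArc G p q c x y → r x < r y := by
    rintro x y ⟨hadj, hmod⟩
    obtain ⟨hl', hu'⟩ := hc'.2 hadj
    have hqp : (q:ℤ) < (p:ℤ) := by
      rcases main hadj with ⟨h1, h2⟩ | ⟨h1, h2⟩ <;> linarith
    have hcx0 : (0:ℤ) ≤ (c x : ℤ) := Int.natCast_nonneg _
    have hcy0 : (0:ℤ) ≤ (c y : ℤ) := Int.natCast_nonneg _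
    have hcxp : (c x : ℤ) < p := by exact_mod_cast hclt x
    have hcyp : (c y : ℤ) < p := by exact_mod_cast hclt y
    have hcases := int_emod_cases hpZ (by omega) (by omega) (by omega) hqp hmod
    rcases hcases with hcase | hcase
    · -- c y - c x = q ; show c' y - c' x ≥ q'
      have hside : (q':ℤ) ≤ (c' y : ℤ) - (c' x : ℤ) := by
        rcases abs_cases ((c' x : ℤ) - (c' y : ℤ)) with ⟨he, _⟩ | ⟨he, _⟩
        · exfalso
          have := (fwd_bnd hpZ hp'Z hqZ hkey (show (q':ℤ) ≤ (c' x:ℤ) - c' y by omega)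
            (by omega) (hC x) (hC y) (hr0 x) (hr1 x) (hr0 y) (hr1 y)).1
          linarith
        · omega
      have e1 : r y - r x = ((c' y : ℤ) - c' x) * p - ((c y : ℤ) - c x) * p' := by
        have := hC x
        have := hC y
        linarith [hC x, hC y]
      have k1 : (q':ℤ) * p ≤ ((c' y : ℤ) - c' x) * p := mul_le_mul_of_nonneg_right hside hpZ.le
      rw [hcase] at e1
      nlinarith
    · -- c y - c x = q - p ; c' x - c' y ≥ q'
      have hside : (q':ℤ) ≤ (c' x : ℤ) - (c' y : ℤ) := by
        rcases abs_cases ((c' x : ℤ) - (c' y : ℤ)) with ⟨he, _⟩ | ⟨he, _⟩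
        · omega
        · exfalso
          have := (fwd_bnd hpZ hp'Z hqZ hkey (show (q':ℤ) ≤ (c' y:ℤ) - c' x by omega)
            (by omega) (hC y) (hC x) (hr0 y) (hr1 y) (hr0 x) (hr1 x)).1
          linarith
      have hside' : (c' x : ℤ) - (c' y : ℤ) ≤ (p':ℤ) - q' := by
        rcases abs_cases ((c' x : ℤ) - (c' y : ℤ)) with ⟨he, _⟩ | ⟨he, _⟩ <;> omega
      have e1 : r y - r x = ((c' y : ℤ) - c' x) * p - ((c y : ℤ) - c x) * p' := by
        linarith [hC x, hC y]
      have k2 : ((c' x : ℤ) - c' y) * p ≤ ((p':ℤ) - q') * p := mul_le_mul_of_nonneg_right hside' hpZ.le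
      rw [hcase] at e1
      nlinarith
  refine ⟨c, hcol, fun v hv => ?_⟩
  have mono : ∀ ⦃u w⦄, Relation.TransGen (DArc G p q c) u w → r u < r w := by
    intro u w h
    induction h with
    | single h => exact step h
    | tail _ h ih => exact lt_trans ih (step h)
  exact absurd (mono hv) (lt_irrefl _)


end GuichardHelpers


set_option maxHeartbeats 1000000 in
private lemma backward_dir {V : Type*} [Fintype V] (G : SimpleGraph V) (p q : ℕ)
    (hq : 0 < q) (hp2q : 2 * q + 1 ≤ p) (c : V → ℕ)
    (hc : IsCircColoring G p q c) (hac : Acyclic (DArc G p q c)) :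
    ∃ c'' : V → ℕ,
      IsCircColoring G ((Fintype.card V + 2) * p - 1) ((Fintype.card V + 2) * q) c'' := by
  classical
  set n := Fintype.card V with hn
  set N := n + 2 with hN
  set h : V → ℕ := hgt (DArc G p q c) with hh
  obtain ⟨cc, hcc⟩ : ∃ cc : V → ℕ, ∀ v, cc v = N * c v + h v :=
    ⟨fun v => N * c v + h v, fun _ => rfl⟩
  refine ⟨cc, ?_, ?_⟩
  · intro v
    rw [hcc v]
    have h1 : c v + 1 ≤ p := hc.1 v
    have h2 : N * (c v + 1) ≤ N * p := Nat.mul_le_mul_left N h1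
    rw [Nat.mul_add, Nat.mul_one] at h2
    have h3 : h v ≤ n := hgt_le _ v
    omega
  · intro x y hxy
    have hqZ : (1:ℤ) ≤ (q:ℤ) := by exact_mod_cast hq
    have hpq : (2:ℤ) * q + 1 ≤ (p:ℤ) := by exact_mod_cast hp2q
    have hx3 : (h x : ℤ) ≤ (n:ℤ) := by exact_mod_cast hgt_le (DArc G p q c) x
    have hy3 : (h y : ℤ) ≤ (n:ℤ) := by exact_mod_cast hgt_le (DArc G p q c) y
    have hnp : 1 ≤ N * p := Nat.mul_pos (by omega) (by omega)
    have core : ∀ a b : V, G.Adj a b → (q:ℤ) ≤ (c a : ℤ) - (c b : ℤ) →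
        (N:ℤ) * q ≤ (N * c a + h a : ℤ) - (N * c b + h b : ℤ) ∧
        (N * c a + h a : ℤ) - (N * c b + h b : ℤ) ≤ ((N:ℤ) * p - 1) - N * q := by
      intro a b hab hge
      obtain ⟨hl, hu⟩ := hc.2 hab
      have hD : (c a : ℤ) - c b ≤ (p:ℤ) - q := by
        rcases abs_cases ((c a : ℤ) - (c b : ℤ)) with ⟨he, _⟩ | ⟨he, _⟩ <;> omega
      have ha3 : (h a : ℤ) ≤ (n:ℤ) := by exact_mod_cast hgt_le (DArc G p q c) a
      have hb3 : (h b : ℤ) ≤ (n:ℤ) := by exact_mod_cast hgt_le (DArc G p q c) b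
      have hcaseD : ((q:ℤ) + 1 ≤ (c a:ℤ) - c b ∧ (c a:ℤ) - c b ≤ (p:ℤ) - q - 1) ∨
          ((c a:ℤ) - c b = q ∧ ((h b : ℤ)) < h a) ∨
          ((c a:ℤ) - c b = (p:ℤ) - q ∧ ((h a : ℤ)) < h b) := by
        rcases (show ((c a:ℤ) - c b = q) ∨ ((c a:ℤ) - c b = (p:ℤ) - q) ∨
            ((q:ℤ) + 1 ≤ (c a:ℤ) - c b ∧ (c a:ℤ) - c b ≤ (p:ℤ) - q - 1) by omega) with
          hD1 | hD1 | hD1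
        · -- arc b → a
          have harc : DArc G p q c b a := by
            refine ⟨hab.symm, ?_⟩
            rw [show (c a : ℤ) - c b = (q:ℤ) from hD1]
          · right; left
            exact ⟨hD1, by exact_mod_cast hgt_lt hac harc⟩
        · -- arc a → b : c b - c a = q - p
          have harc : DArc G p q c a b := by
            refine ⟨hab, ?_⟩
            rw [show (c b : ℤ) - c a = (q:ℤ) + (p:ℤ) * (-1) by omega]
            exact Int.add_mul_emod_self_left (a := (q:ℤ)) (b := (p:ℤ)) (c := -1)
          right; right
          exact ⟨hD1, by exact_mod_cast hgt_lt hac harc⟩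
        · left; exact hD1
      have := bnd (N := (N:ℤ)) (n := (n:ℤ)) (Int.natCast_nonneg n)
        (by rw [hN]; push_cast; ring) hqZ hpq
        (Int.natCast_nonneg (h a)) ha3 (Int.natCast_nonneg (h b)) hb3 hcaseD
      obtain ⟨b1, b2⟩ := this
      push_cast at b1 b2 ⊢
      constructor
      · nlinarith [b1]
      · nlinarith [b2]
    obtain ⟨hl, hu⟩ := hc.2 hxy
    have hsplit : ((q:ℤ) ≤ (c x:ℤ) - c y) ∨ ((q:ℤ) ≤ (c y:ℤ) - c x) := by
      rcases abs_cases ((c x : ℤ) - (c y : ℤ)) with ⟨he, _⟩ | ⟨he, _⟩ <;> omega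
    have hcast : (((N * p - 1 : ℕ)) : ℤ) = (N:ℤ) * p - 1 := by
      push_cast [Nat.cast_sub hnp]
      ring
    have hcast2 : (((N * q : ℕ)) : ℤ) = (N:ℤ) * q := by push_cast; ring
    simp only [hcc]
    rw [hcast, hcast2]
    rcases hsplit with hge | hge
    · obtain ⟨b1, b2⟩ := core x y hxy hge
      push_cast at b1 b2 ⊢
      have hpos : (0:ℤ) ≤ ((N:ℤ) * c x + h x) - ((N:ℤ) * c y + h y) := by
        push_cast at b1 ⊢
        nlinarith [b1, hqZ, show (0:ℤ) ≤ (N:ℤ) by positivity]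
      push_cast at hpos
      rw [abs_of_nonneg (by linarith [hpos])]
      constructor
      · linarith
      · linarith
    · obtain ⟨b1, b2⟩ := core y x hxy.symm hge
      push_cast at b1 b2 ⊢
      have hpos : (0:ℤ) ≤ ((N:ℤ) * c y + h y) - ((N:ℤ) * c x + h x) := by
        push_cast at b1 ⊢
        nlinarith [b1, hqZ, show (0:ℤ) ≤ (N:ℤ) by positivity]
      push_cast at hpos
      rw [abs_sub_comm, abs_of_nonneg (by linarith [hpos])]
      constructor
      · linarith
      · linarith

private lemma exists_coloring0 {V : Type*} [Fintype V] (G : SimpleGraph V) :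
    ∃ c : V → ℕ, IsCircColoring G (Fintype.card V + 1) 1 c := by
  classical
  obtain ⟨cc, hcc⟩ : ∃ cc : V → ℕ, ∀ v, cc v = ((Fintype.equivFin V) v : ℕ) :=
    ⟨fun v => ((Fintype.equivFin V) v : ℕ), fun _ => rfl⟩
  refine ⟨cc, fun v => ?_, fun x y hxy => ?_⟩
  · rw [hcc v]
    have := ((Fintype.equivFin V) v).is_lt
    omega
  · simp only [hcc]
    have hne : ((Fintype.equivFin V) x : ℕ) ≠ ((Fintype.equivFin V) y : ℕ) := by
      intro h
      exact hxy.ne ((Fintype.equivFin V).injective (Fin.ext h))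
    have h1 := ((Fintype.equivFin V) x).is_lt
    have h2 := ((Fintype.equivFin V) y).is_lt
    have h1' : (((Fintype.equivFin V) x : ℕ) : ℤ) < (Fintype.card V : ℤ) := by exact_mod_cast h1
    have h2' : (((Fintype.equivFin V) y : ℕ) : ℤ) < (Fintype.card V : ℤ) := by exact_mod_cast h2
    have hne' : (((Fintype.equivFin V) x : ℕ) : ℤ) ≠ (((Fintype.equivFin V) y : ℕ) : ℤ) := by
      exact_mod_cast hne
    push_cast
    rcases abs_cases ((((Fintype.equivFin V) x : ℕ) : ℤ) - (((Fintype.equivFin V) y : ℕ) : ℤ)) with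
      ⟨he, _⟩ | ⟨he, _⟩ <;> constructor <;> omega

/-- Guichard's lemma: `χ_c(G) < p/q` iff there exists a
`(p,q)`-coloring `c` of `G` with `D_c(G)` acyclic. -/
theorem stmt_8 {V : Type*} [Fintype V] (G : SimpleGraph V) (p q : ℕ)
    (hp : 0 < p) (hq : 0 < q) :
    circChrom G < (p : ℝ) / (q : ℝ) ↔
      ∃ c : V → ℕ, IsCircColoring G p q c ∧ Acyclic (DArc G p q c) := by
  classical
  set S : Set ℝ := {r : ℝ | ∃ p q : ℕ, 0 < p ∧ 0 < q ∧ r = (p : ℝ) / (q : ℝ) ∧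
    ∃ c : V → ℕ, IsCircColoring G p q c} with hSdef
  have hcc : circChrom G = sInf S := rfl
  have hbdd : BddBelow S := by
    refine ⟨0, fun r hr => ?_⟩
    obtain ⟨p', q', hp', hq', rfl, -⟩ := hr
    positivity
  have hne : S.Nonempty := by
    obtain ⟨c0, hc0⟩ := exists_coloring0 G
    exact ⟨((Fintype.card V + 1 : ℕ) : ℝ) / ((1 : ℕ) : ℝ),
      Fintype.card V + 1, 1, by omega, one_pos, rfl, c0, hc0⟩
  have hq0R : (0:ℝ) < (q:ℝ) := by exact_mod_cast hq
  have hp0R : (0:ℝ) < (p:ℝ) := by exact_mod_cast hp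
  constructor
  · intro hlt
    rw [hcc] at hlt
    have hex : ∃ r ∈ S, r < (p:ℝ)/(q:ℝ) := by
      by_contra hcon
      push_neg at hcon
      have : (p:ℝ)/(q:ℝ) ≤ sInf S := le_csInf hne hcon
      linarith
    obtain ⟨r, hrS, hrlt⟩ := hex
    obtain ⟨p', q', hp', hq', rfl, c', hc'⟩ := hrS
    have hq'R : (0:ℝ) < (q':ℝ) := by exact_mod_cast hq'
    have hltR : (p':ℝ) * q < (p:ℝ) * q' := (div_lt_div_iff₀ hq'R hq0R).mp hrlt
    have hltN : p' * q < p * q' := by exact_mod_cast hltR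
    exact forward_dir G p q p' q' hp hq hp' hq' hltN c' hc'
  · rintro ⟨c, hc, hac⟩
    rw [hcc]
    by_cases hE : ∃ x y, G.Adj x y
    · obtain ⟨x, y, hxy⟩ := hE
      obtain ⟨h1, h2⟩ := hc.2 hxy
      have hge : 2 * q ≤ p := by
        have : (2 * q : ℤ) ≤ (p : ℤ) := by
          rcases abs_cases ((c x : ℤ) - (c y : ℤ)) with ⟨he, _⟩ | ⟨he, _⟩ <;> omega
        exact_mod_cast this
      have hne2 : p ≠ 2 * q := by
        intro heq
        have heqZ : (p:ℤ) = 2 * q := by exact_mod_cast heq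
        have habs : (c y:ℤ) - c x = q ∨ (c y:ℤ) - c x = -(q:ℤ) := by
          rcases abs_cases ((c x : ℤ) - (c y : ℤ)) with ⟨he, _⟩ | ⟨he, _⟩ <;> omega
        have habs' : (c x:ℤ) - c y = q ∨ (c x:ℤ) - c y = -(q:ℤ) := by omega
        have harcmod : ∀ t : ℤ, t = q ∨ t = -(q:ℤ) → t % p = (q:ℤ) % p := by
          rintro t (rfl | rfl)
          · rfl
          · rw [show -(q:ℤ) = (q:ℤ) + (p:ℤ) * (-1) by omega]
            exact Int.add_mul_emod_self_left (a := (q:ℤ)) (b := (p:ℤ)) (c := -1)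
        exact hac x ((Relation.TransGen.single ⟨hxy, harcmod _ habs⟩).tail
          ⟨hxy.symm, harcmod _ habs'⟩)
      have hp2q : 2 * q + 1 ≤ p := by omega
      obtain ⟨c'', hc''⟩ := backward_dir G p q hq hp2q c hc hac
      set n := Fintype.card V with hn
      have hNp2 : 2 ≤ (n + 2) * p := by
        have h := Nat.mul_le_mul (le_refl (n + 2)) hp
        omega
      have hNp : 1 ≤ (n + 2) * p := by omega
      have hNq : 0 < (n + 2) * q := Nat.mul_pos (by omega) hq
      have hmem : (((n + 2) * p - 1 : ℕ) : ℝ) / (((n + 2) * q : ℕ) : ℝ) ∈ S :=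
        ⟨(n + 2) * p - 1, (n + 2) * q, by omega, hNq, rfl, c'', hc''⟩
      refine lt_of_le_of_lt (csInf_le hbdd hmem) ?_
      rw [div_lt_div_iff₀ (by exact_mod_cast hNq) hq0R]
      have hcast : (((n + 2) * p - 1 : ℕ) : ℝ) = ((n:ℝ) + 2) * p - 1 := by
        push_cast [Nat.cast_sub hNp]
        ring
      rw [hcast]
      push_cast
      nlinarith [hq0R, hp0R, show (0:ℝ) ≤ (n:ℝ) by positivity]
    · push_neg at hE
      have hmem : ((1 : ℕ) : ℝ) / ((2 * q : ℕ) : ℝ) ∈ S := by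
        refine ⟨1, 2 * q, one_pos, by omega, rfl, fun _ => 0, fun v => one_pos, ?_⟩
        intro a b hab
        exact absurd hab (hE a b)
      refine lt_of_le_of_lt (csInf_le hbdd hmem) ?_
      rw [div_lt_div_iff₀ (by positivity) hq0R]
      push_cast
      nlinarith [hq0R, hp0R, show (1:ℝ) ≤ (p:ℝ) by exact_mod_cast hp]
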